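/- Let G = G_1 ⊗ G_2 be the join of two graphs, with V_1 = V(G_1) and V_2 = V(G_2). For any two independent sets I_s, I_t of G, there is a reconfiguration sequence from I_s to I_t of length at most 2; that is, either I_s = I_t, or G[I_s △ I_t] is connected, or there exists an independent set I_1 with both G[I_s △ I_1] and G[I_1 △ I_t] connected. -/

import Mathlib

/-- A set of vertices is independent: no two of its vertices are adjacent. -/
def IsIndep {V : Type*} (G : SimpleGraph V) (I : Set V) : Prop :=
  ∀ ⦃a⦄, a ∈ I → ∀ ⦃b⦄, b ∈ I → ¬ G.Adj a b

/-- The join `G₁ ⊗ G₂` of two graphs: keep the edges of each side and add all edges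
between the two sides. -/
def graphJoin {V₁ V₂ : Type*} (G₁ : SimpleGraph V₁) (G₂ : SimpleGraph V₂) :
    SimpleGraph (V₁ ⊕ V₂) where
  Adj x y :=
    match x, y with
    | .inl a, .inl b => G₁.Adj a b
    | .inr a, .inr b => G₂.Adj a b
    | .inl _, .inr _ => True
    | .inr _, .inl _ => True
  symm := by
    constructor
    rintro (a | a) (b | b) h
    · exact G₁.adj_symm h
    · trivial
    · trivial
    · exact G₂.adj_symm h
  loopless := by
    constructor
    rintro (a | a) h
    · exact G₁.loopless.irrefl a h
    · exact G₂.loopless.irrefl a h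

/-- A star is connected. -/
lemma star_connected {V : Type*} (H : SimpleGraph V) (S : Set V) (c : V) (hc : c ∈ S)
    (h : ∀ x ∈ S, x ≠ c → H.Adj x c) : (H.induce S).Connected := by
  rw [SimpleGraph.connected_iff]
  refine ⟨?_, ⟨⟨c, hc⟩⟩⟩
  have key : ∀ x : S, (H.induce S).Reachable x ⟨c, hc⟩ := by
    rintro ⟨x, hx⟩
    by_cases hxc : x = c
    · subst hxc; exact SimpleGraph.Reachable.refl _
    · exact SimpleGraph.Adj.reachable (h x hx hxc)
  intro x y
  exact (key x).trans (key y).symm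

lemma two_center_connected {V : Type*} (H : SimpleGraph V) (S : Set V) (a b : V)
    (ha : a ∈ S) (hb : b ∈ S) (hab : H.Adj a b)
    (h : ∀ x ∈ S, x = a ∨ x = b ∨ H.Adj x a ∨ H.Adj x b) : (H.induce S).Connected := by
  rw [SimpleGraph.connected_iff]
  refine ⟨?_, ⟨⟨a, ha⟩⟩⟩
  have hab' : (H.induce S).Adj ⟨a, ha⟩ ⟨b, hb⟩ := hab
  have key : ∀ x : S, (H.induce S).Reachable x ⟨a, ha⟩ := by
    rintro ⟨x, hx⟩
    rcases h x hx with h1 | h1 | h1 | h1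
    · subst h1; exact SimpleGraph.Reachable.refl _
    · subst h1; exact hab'.symm.reachable
    · exact SimpleGraph.Adj.reachable (show (H.induce S).Adj ⟨x, hx⟩ ⟨a, ha⟩ from h1)
    · exact (SimpleGraph.Adj.reachable (show (H.induce S).Adj ⟨x, hx⟩ ⟨b, hb⟩ from h1)).trans
        hab'.symm.reachable
  intro x y
  exact (key x).trans (key y).symm

lemma indep_side {V₁ V₂ : Type*} {G₁ : SimpleGraph V₁} {G₂ : SimpleGraph V₂}
    {I : Set (V₁ ⊕ V₂)} (hI : IsIndep (graphJoin G₁ G₂) I) :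
    (∀ x ∈ I, ∃ u, x = Sum.inl u) ∨ (∀ x ∈ I, ∃ v, x = Sum.inr v) := by
  by_cases h : ∃ v, Sum.inr v ∈ I
  · obtain ⟨v, hv⟩ := h
    right
    rintro (u | w) hx
    · exact absurd (show (graphJoin G₁ G₂).Adj (Sum.inl u) (Sum.inr v) from trivial)
        (hI hx hv)
    · exact ⟨w, rfl⟩
  · left
    rintro (u | w) hx
    · exact ⟨u, rfl⟩
    · exact absurd ⟨w, hx⟩ h

/-- In a join with both sides nonempty, any two independent sets can be reconfigured into
each other in at most 2 steps. -/
theorem stmt_6 {V₁ V₂ : Type*} [Nonempty V₁] [Nonempty V₂]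
    (G₁ : SimpleGraph V₁) (G₂ : SimpleGraph V₂)
    (I_s I_t : Set (V₁ ⊕ V₂))
    (hs : IsIndep (graphJoin G₁ G₂) I_s) (ht : IsIndep (graphJoin G₁ G₂) I_t) :
    I_s = I_t ∨ ((graphJoin G₁ G₂).induce (symmDiff I_s I_t)).Connected ∨
      ∃ I₁ : Set (V₁ ⊕ V₂), IsIndep (graphJoin G₁ G₂) I₁ ∧
        ((graphJoin G₁ G₂).induce (symmDiff I_s I₁)).Connected ∧
        ((graphJoin G₁ G₂).induce (symmDiff I₁ I_t)).Connected := by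
  by_cases heq : I_s = I_t
  · exact Or.inl heq
  obtain ⟨u₀⟩ := ‹Nonempty V₁›
  obtain ⟨v₀⟩ := ‹Nonempty V₂›
  -- helper: singleton independent
  have hsing : ∀ x : V₁ ⊕ V₂, IsIndep (graphJoin G₁ G₂) {x} := by
    intro x a ha b hb
    rw [Set.mem_singleton_iff] at ha hb
    subst ha; subst hb
    exact (graphJoin G₁ G₂).loopless.irrefl _
  -- helper: if I on the inl side, symmDiff I {inr v} is a connected star, etc.
  have starL : ∀ (I : Set (V₁ ⊕ V₂)), (∀ x ∈ I, ∃ u, x = Sum.inl u) →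
      ((graphJoin G₁ G₂).induce (symmDiff I {Sum.inr v₀})).Connected := by
    intro I hI
    have hcm : Sum.inr v₀ ∈ symmDiff I {Sum.inr v₀} := by
      rw [Set.mem_symmDiff]
      right
      refine ⟨rfl, fun hmem => ?_⟩
      obtain ⟨u, hu⟩ := hI _ hmem
      exact Sum.inr_ne_inl hu
    apply star_connected _ _ _ hcm
    intro x hx hne
    rw [Set.mem_symmDiff] at hx
    rcases hx with ⟨hx, _⟩ | ⟨hx, _⟩
    · obtain ⟨u, rfl⟩ := hI _ hx
      exact trivial
    · exact absurd hx hne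
  have starR : ∀ (I : Set (V₁ ⊕ V₂)), (∀ x ∈ I, ∃ v, x = Sum.inr v) →
      ((graphJoin G₁ G₂).induce (symmDiff I {Sum.inl u₀})).Connected := by
    intro I hI
    have hcm : Sum.inl u₀ ∈ symmDiff I {Sum.inl u₀} := by
      rw [Set.mem_symmDiff]
      right
      refine ⟨rfl, fun hmem => ?_⟩
      obtain ⟨v, hv⟩ := hI _ hmem
      exact Sum.inl_ne_inr hv
    apply star_connected _ _ _ hcm
    intro x hx hne
    rw [Set.mem_symmDiff] at hx
    rcases hx with ⟨hx, _⟩ | ⟨hx, _⟩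
    · obtain ⟨v, rfl⟩ := hI _ hx
      exact trivial
    · exact absurd hx hne
  have symmL : ∀ (I J : Set (V₁ ⊕ V₂)), symmDiff I J = symmDiff J I := fun I J => symmDiff_comm I J
  rcases indep_side hs with hsL | hsR <;> rcases indep_side ht with htL | htR
  · -- both inl: go through {inr v₀}
    right; right
    exact ⟨{Sum.inr v₀}, hsing _, starL _ hsL, by rw [symmL]; exact starL _ htL⟩
  · -- I_s inl, I_t inr
    by_cases hse : I_s = ∅
    · -- I_s empty: treat as inr side
      right; right
      refine ⟨{Sum.inl u₀}, hsing _, ?_, by rw [symmL]; exact starR _ htR⟩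
      apply starR
      intro x hx; rw [hse] at hx; exact absurd hx (Set.notMem_empty x)
    by_cases hte : I_t = ∅
    · right; right
      refine ⟨{Sum.inr v₀}, hsing _, starL _ hsL, ?_⟩
      rw [symmL]
      apply starL
      intro x hx; rw [hte] at hx; exact absurd hx (Set.notMem_empty x)
    · -- both nonempty, opposite sides: symmDiff connected directly
      right; left
      obtain ⟨a, ha⟩ := Set.nonempty_iff_ne_empty.2 hse
      obtain ⟨b, hb⟩ := Set.nonempty_iff_ne_empty.2 hte
      obtain ⟨ua, rfl⟩ := hsL _ ha
      obtain ⟨vb, rfl⟩ := htR _ hb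
      have hdis : ∀ x, x ∈ I_s → x ∈ I_t → False := by
        rintro x hxs hxt
        obtain ⟨u, rfl⟩ := hsL _ hxs
        obtain ⟨v, hv⟩ := htR _ hxt
        exact Sum.inl_ne_inr hv
      have ha' : Sum.inl ua ∈ symmDiff I_s I_t := by
        rw [Set.mem_symmDiff]; exact Or.inl ⟨ha, fun h => hdis _ ha h⟩
      have hb' : Sum.inr vb ∈ symmDiff I_s I_t := by
        rw [Set.mem_symmDiff]; exact Or.inr ⟨hb, fun h => hdis _ h hb⟩
      apply two_center_connected _ _ _ _ ha' hb' (show (graphJoin G₁ G₂).Adj (Sum.inl ua) (Sum.inr vb) from trivial)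
      intro x hx
      rw [Set.mem_symmDiff] at hx
      rcases hx with ⟨hx, _⟩ | ⟨hx, _⟩
      · obtain ⟨u, rfl⟩ := hsL _ hx
        right; right; right; exact trivial
      · obtain ⟨v, rfl⟩ := htR _ hx
        right; right; left; exact trivial
  · -- I_s inr, I_t inl: symmetric
    by_cases hse : I_s = ∅
    · right; right
      refine ⟨{Sum.inr v₀}, hsing _, ?_, by rw [symmL]; exact starL _ htL⟩
      apply starL
      intro x hx; rw [hse] at hx; exact absurd hx (Set.notMem_empty x)
    by_cases hte : I_t = ∅
    · right; right
      refine ⟨{Sum.inl u₀}, hsing _, starR _ hsR, ?_⟩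
      rw [symmL]
      apply starR
      intro x hx; rw [hte] at hx; exact absurd hx (Set.notMem_empty x)
    · right; left
      obtain ⟨a, ha⟩ := Set.nonempty_iff_ne_empty.2 hse
      obtain ⟨b, hb⟩ := Set.nonempty_iff_ne_empty.2 hte
      obtain ⟨va, rfl⟩ := hsR _ ha
      obtain ⟨ub, rfl⟩ := htL _ hb
      have hdis : ∀ x, x ∈ I_s → x ∈ I_t → False := by
        rintro x hxs hxt
        obtain ⟨v, rfl⟩ := hsR _ hxs
        obtain ⟨u, hu⟩ := htL _ hxt
        exact Sum.inr_ne_inl hu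
      have ha' : Sum.inr va ∈ symmDiff I_s I_t := by
        rw [Set.mem_symmDiff]; exact Or.inl ⟨ha, fun h => hdis _ ha h⟩
      have hb' : Sum.inl ub ∈ symmDiff I_s I_t := by
        rw [Set.mem_symmDiff]; exact Or.inr ⟨hb, fun h => hdis _ h hb⟩
      apply two_center_connected _ _ _ _ ha' hb' (show (graphJoin G₁ G₂).Adj (Sum.inr va) (Sum.inl ub) from trivial)
      intro x hx
      rw [Set.mem_symmDiff] at hx
      rcases hx with ⟨hx, _⟩ | ⟨hx, _⟩
      · obtain ⟨v, rfl⟩ := hsR _ hx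
        right; right; right; exact trivial
      · obtain ⟨u, rfl⟩ := htL _ hx
        right; right; left; exact trivial
  · -- both inr: go through {inl u₀}
    right; right
    exact ⟨{Sum.inl u₀}, hsing _, starR _ hsR, by rw [symmL]; exact starR _ htR⟩
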